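/- Let d ≥ 1 and let f : ℝ^d → ℝ be a coercive function with e^{-f} ∈ L¹(ℝ^d) such that f(x) = e^{-1/‖x‖²} for x ∈ B(0,1) (with f(0)=0) and f(x) > a for some a > 0 and all x outside B(0,1). If X_t has density proportional to e^{-f(x)/t}, then log^{1/2}(1/t) · X_t converges in law as t → 0⁺ to the uniform distribution on the unit ball B(0,1). -/

import Mathlib

open MeasureTheory Topology Filter Metric

noncomputable def c17 (t : ℝ) : ℝ := (Real.log (1 / t)) ^ ((1:ℝ) / 2)

lemma c17_def (t : ℝ) : c17 t = (Real.log (1 / t)) ^ ((1:ℝ) / 2) := rfl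

lemma hinv17 : Tendsto (fun t : ℝ => 1 / t) (𝓝[>] 0) atTop := by
  simpa [one_div, Pi.inv_def] using Filter.Tendsto.inv_tendsto_nhdsGT_zero (tendsto_id (x := 𝓝[>] (0:ℝ)))

lemma hlog17 : Tendsto (fun t : ℝ => Real.log (1 / t)) (𝓝[>] 0) atTop :=
  Real.tendsto_log_atTop.comp hinv17

lemma hc17_tendsto : Tendsto c17 (𝓝[>] 0) atTop :=
  (tendsto_rpow_atTop (by norm_num : (0:ℝ) < 1/2)).comp hlog17

lemma hc17_pos {t : ℝ} (ht : t ∈ Set.Ioo (0:ℝ) 1) : 0 < c17 t := by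
  have hL : 0 < Real.log (1 / t) := Real.log_pos (one_lt_one_div ht.1 ht.2)
  exact Real.rpow_pos_of_pos hL _

lemma hc17_sq {t : ℝ} (ht : t ∈ Set.Ioo (0:ℝ) 1) : c17 t ^ 2 = Real.log (1 / t) := by
  have hL : 0 < Real.log (1 / t) := Real.log_pos (one_lt_one_div ht.1 ht.2)
  rw [c17_def, ← Real.rpow_natCast (Real.log (1/t) ^ ((1:ℝ)/2)) 2, ← Real.rpow_mul hL.le]
  norm_num

lemma gauss17 (d : ℕ) :
    Integrable (fun y : EuclideanSpace ℝ (Fin d) => Real.exp (-‖y‖ ^ 2)) := by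
  have h := (GaussianFourier.integrable_cexp_neg_mul_sq_norm_add_of_euclideanSpace (ι := Fin d)
    (b := 1) (by norm_num) 0 0).norm
  refine h.congr (Eventually.of_forall fun v => ?_)
  push_cast [Complex.norm_exp]
  simp [← Complex.ofReal_pow]

section Aux
variable {d : ℕ} {f : EuclideanSpace ℝ (Fin d) → ℝ}

-- the key pointwise computation inside the ball
lemma key17 (hball : ∀ x ∈ ball (0 : EuclideanSpace ℝ (Fin d)) 1, x ≠ 0 →
      f x = Real.exp (-1 / ‖x‖ ^ 2))
    {t : ℝ} (ht : t ∈ Set.Ioo (0:ℝ) 1) {y : EuclideanSpace ℝ (Fin d)} (hy0 : y ≠ 0)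
    (hyc : ‖y‖ < c17 t) :
    f ((c17 t)⁻¹ • y) / t = Real.exp (Real.log (1 / t) * (1 - 1 / ‖y‖ ^ 2)) := by
  have hc := hc17_pos ht
  have hL : 0 < Real.log (1 / t) := Real.log_pos (one_lt_one_div ht.1 ht.2)
  have hexp : Real.exp (Real.log (1 / t)) = 1 / t := Real.exp_log (one_div_pos.2 ht.1)
  have hz : ‖(c17 t)⁻¹ • y‖ = ‖y‖ / c17 t := by
    rw [norm_smul, Real.norm_eq_abs, abs_inv, abs_of_pos hc, inv_mul_eq_div]
  have hzball : (c17 t)⁻¹ • y ∈ ball (0 : EuclideanSpace ℝ (Fin d)) 1 := by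
    rw [mem_ball_zero_iff, hz, div_lt_one hc]; exact hyc
  have hzne : (c17 t)⁻¹ • y ≠ 0 := smul_ne_zero (inv_ne_zero hc.ne') hy0
  rw [hball _ hzball hzne]
  have hnorm2 : ‖(c17 t)⁻¹ • y‖ ^ 2 = ‖y‖ ^ 2 / Real.log (1 / t) := by
    rw [hz, div_pow, hc17_sq ht]
  rw [hnorm2]
  have hy2 : (0:ℝ) < ‖y‖ ^ 2 := by
    have : 0 < ‖y‖ := norm_pos_iff.2 hy0
    positivity
  have step : Real.exp (-1 / (‖y‖ ^ 2 / Real.log (1 / t))) / t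
      = Real.exp (-1 / (‖y‖ ^ 2 / Real.log (1 / t))) * Real.exp (Real.log (1 / t)) := by
    rw [hexp, mul_one_div]
  rw [step, ← Real.exp_add]
  congr 1
  field_simp
  ring

lemma hf017 (hball : ∀ x ∈ ball (0 : EuclideanSpace ℝ (Fin d)) 1, x ≠ 0 →
      f x = Real.exp (-1 / ‖x‖ ^ 2)) (h0 : f 0 = 0)
    {a : ℝ} (ha : 0 < a)
    (hout : ∀ x ∉ ball (0 : EuclideanSpace ℝ (Fin d)) 1, a < f x) :
    ∀ x, 0 ≤ f x := by
  intro x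
  by_cases hx : x ∈ ball (0 : EuclideanSpace ℝ (Fin d)) 1
  · by_cases hx0 : x = 0
    · simp [hx0, h0]
    · rw [hball x hx hx0]; positivity
  · exact (ha.trans (hout x hx)).le

lemma hKint17 (hmeas : Measurable f)
    (hint : Integrable (fun x : EuclideanSpace ℝ (Fin d) => Real.exp (-f x)))
    (hf0 : ∀ x, 0 ≤ f x) {t : ℝ} (ht : t ∈ Set.Ioo (0:ℝ) 1) :
    Integrable (fun y : EuclideanSpace ℝ (Fin d) => Real.exp (-f ((c17 t)⁻¹ • y) / t)) := by
  have h1 : Integrable (fun x : EuclideanSpace ℝ (Fin d) => Real.exp (-f x / t)) := by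
    refine hint.mono ?_ ?_
    · exact (Real.measurable_exp.comp (hmeas.neg.div_const t)).aestronglyMeasurable
    · filter_upwards with x
      rw [Real.norm_eq_abs, Real.norm_eq_abs, abs_of_pos (Real.exp_pos _),
        abs_of_pos (Real.exp_pos _)]
      apply Real.exp_le_exp.2
      rw [neg_div, neg_le_neg_iff, le_div_iff₀ ht.1]
      exact mul_le_of_le_one_right (hf0 x) ht.2.le
  exact h1.comp_smul (inv_ne_zero (hc17_pos ht).ne')

end Aux

set_option maxHeartbeats 2000000 in
theorem aux17 (d : ℕ) (hd : 1 ≤ d) (f : EuclideanSpace ℝ (Fin d) → ℝ)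
    (hmeas : Measurable f)
    (hint : Integrable (fun x : EuclideanSpace ℝ (Fin d) => Real.exp (-f x)))
    (hball : ∀ x ∈ ball (0 : EuclideanSpace ℝ (Fin d)) 1, x ≠ 0 →
      f x = Real.exp (-1 / ‖x‖ ^ 2))
    (h0 : f 0 = 0)
    (a : ℝ) (ha : 0 < a)
    (hout : ∀ x ∉ ball (0 : EuclideanSpace ℝ (Fin d)) 1, a < f x)
    (ψ : BoundedContinuousFunction (EuclideanSpace ℝ (Fin d)) ℝ) :
    Tendsto (fun t : ℝ => ∫ y : EuclideanSpace ℝ (Fin d),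
        ψ y * Real.exp (-f ((c17 t)⁻¹ • y) / t))
      (𝓝[>] 0) (𝓝 (∫ y in ball (0 : EuclideanSpace ℝ (Fin d)) 1, ψ y)) := by
  have hf0 : ∀ x, 0 ≤ f x := hf017 hball h0 ha hout
  have hIoo : Set.Ioo (0:ℝ) 1 ∈ 𝓝[>] (0:ℝ) :=
    Ioo_mem_nhdsGT_of_mem ⟨le_refl 0, one_pos⟩
  have hψK : ∀ t ∈ Set.Ioo (0:ℝ) 1, Integrable (fun y : EuclideanSpace ℝ (Fin d) =>
      ψ y * Real.exp (-f ((c17 t)⁻¹ • y) / t)) := fun t ht =>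
    (hKint17 hmeas hint hf0 ht).bdd_mul ψ.continuous.aestronglyMeasurable
      (Eventually.of_forall fun x => ψ.norm_coe_le_norm x)
  -- the inner part: dominated convergence
  have hnontriv : Nontrivial (EuclideanSpace ℝ (Fin d)) := by
    apply Module.nontrivial_of_finrank_pos (R := ℝ)
    rw [finrank_euclideanSpace_fin]
    omega
  have hae : ∀ᵐ y : EuclideanSpace ℝ (Fin d) ∂volume, ‖y‖ ≠ 1 := by
    rw [ae_iff]
    have : {y : EuclideanSpace ℝ (Fin d) | ¬ ‖y‖ ≠ 1} = sphere (0 : EuclideanSpace ℝ (Fin d)) 1 := by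
      ext y; simp [mem_sphere_iff_norm]
    rw [this]
    exact Measure.addHaar_sphere volume 0 1
  have hinner : Tendsto (fun t => ∫ y : EuclideanSpace ℝ (Fin d),
      Set.indicator (ball (0 : EuclideanSpace ℝ (Fin d)) (c17 t))
        (fun y => ψ y * Real.exp (-f ((c17 t)⁻¹ • y) / t)) y)
      (𝓝[>] 0) (𝓝 (∫ y : EuclideanSpace ℝ (Fin d),
        Set.indicator (ball (0 : EuclideanSpace ℝ (Fin d)) 1) (fun y => ψ y) y)) := by
    apply tendsto_integral_filter_of_dominated_convergence
      (bound := fun y : EuclideanSpace ℝ (Fin d) =>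
        ‖ψ‖ * (Set.indicator (closedBall (0 : EuclideanSpace ℝ (Fin d)) 1) (fun _ => (1:ℝ)) y
          + Real.exp (-‖y‖ ^ 2)))
    · -- measurability
      apply Eventually.of_forall
      intro t
      exact ((ψ.continuous.aestronglyMeasurable.mul
        ((Real.measurable_exp.comp (((hmeas.comp
          (measurable_const_smul ((c17 t)⁻¹))).neg.div_const t))).aestronglyMeasurable)).indicator
        measurableSet_ball)
    · -- bound
      filter_upwards [hIoo] with t ht
      filter_upwards with y
      have hindnn : (0:ℝ) ≤ Set.indicator (closedBall (0 : EuclideanSpace ℝ (Fin d)) 1)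
          (fun _ => (1:ℝ)) y := Set.indicator_nonneg (fun _ _ => zero_le_one) y
      by_cases hy : y ∈ ball (0 : EuclideanSpace ℝ (Fin d)) (c17 t)
      · rw [Set.indicator_of_mem hy]
        have hK1 : Real.exp (-f ((c17 t)⁻¹ • y) / t) ≤ 1 := by
          apply Real.exp_le_one_iff.2
          apply div_nonpos_of_nonpos_of_nonneg _ ht.1.le
          simpa using hf0 _
        have hKpos : (0:ℝ) < Real.exp (-f ((c17 t)⁻¹ • y) / t) := Real.exp_pos _
        rw [norm_mul, Real.norm_eq_abs (Real.exp _), abs_of_pos hKpos]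
        by_cases h1 : ‖y‖ ≤ 1
        · have hmem : y ∈ closedBall (0 : EuclideanSpace ℝ (Fin d)) 1 :=
            mem_closedBall_zero_iff.2 h1
          rw [Set.indicator_of_mem hmem]
          have h2 : ‖ψ y‖ * Real.exp (-f ((c17 t)⁻¹ • y) / t) ≤ ‖ψ‖ * 1 :=
            mul_le_mul (ψ.norm_coe_le_norm y) hK1 hKpos.le (norm_nonneg ψ)
          have h3 : (0:ℝ) < Real.exp (-‖y‖ ^ 2) := Real.exp_pos _
          nlinarith [norm_nonneg ψ]
        · push_neg at h1
          have hy0 : y ≠ 0 := by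
            intro h; rw [h, norm_zero] at h1; linarith
          have hyc : ‖y‖ < c17 t := mem_ball_zero_iff.1 hy
          have hKb : Real.exp (-f ((c17 t)⁻¹ • y) / t) ≤ Real.exp (-‖y‖ ^ 2) := by
            rw [neg_div, key17 hball ht hy0 hyc]
            apply Real.exp_le_exp.2
            rw [neg_le_neg_iff]
            have hy2 : (0:ℝ) < ‖y‖ ^ 2 := by positivity
            have hyL : ‖y‖ ^ 2 ≤ Real.log (1 / t) := by
              have h4 := hc17_sq ht
              nlinarith [norm_nonneg y, hc17_pos ht]
            have h3 : (0:ℝ) ≤ 1 - 1 / ‖y‖ ^ 2 := by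
              have : 1 / ‖y‖ ^ 2 ≤ 1 := by
                rw [div_le_one hy2]; nlinarith
              linarith
            have e1 : ‖y‖ ^ 2 * (1 / ‖y‖ ^ 2) = 1 := by field_simp
            have h5 := mul_le_mul_of_nonneg_right hyL h3
            have h6 : ‖y‖ ^ 2 - 1 + 1 ≤ Real.log (1 / t) * (1 - 1 / ‖y‖ ^ 2) + 1 := by
              nlinarith
            calc ‖y‖ ^ 2 = ‖y‖ ^ 2 - 1 + 1 := by ring
              _ ≤ Real.log (1 / t) * (1 - 1 / ‖y‖ ^ 2) + 1 := h6
              _ ≤ Real.exp (Real.log (1 / t) * (1 - 1 / ‖y‖ ^ 2)) := by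
                  have := Real.add_one_le_exp (Real.log (1 / t) * (1 - 1 / ‖y‖ ^ 2))
                  linarith
          have h2 : ‖ψ y‖ * Real.exp (-f ((c17 t)⁻¹ • y) / t) ≤ ‖ψ‖ * Real.exp (-‖y‖ ^ 2) :=
            mul_le_mul (ψ.norm_coe_le_norm y) hKb hKpos.le (norm_nonneg ψ)
          nlinarith [norm_nonneg ψ]
      · rw [Set.indicator_of_notMem hy, norm_zero]
        have h3 : (0:ℝ) < Real.exp (-‖y‖ ^ 2) := Real.exp_pos _
        nlinarith [norm_nonneg ψ]
    · -- integrable bound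
      apply Integrable.const_mul
      exact ((integrableOn_const measure_closedBall_lt_top.ne).integrable_indicator
        measurableSet_closedBall).add (gauss17 d)
    · -- a.e. pointwise convergence
      filter_upwards [hae] with y hy
      rcases eq_or_ne y 0 with rfl | hy0
      · have hev : ∀ᶠ t in 𝓝[>] (0:ℝ), Set.indicator (ball (0 : EuclideanSpace ℝ (Fin d)) (c17 t))
            (fun y => ψ y * Real.exp (-f ((c17 t)⁻¹ • y) / t)) 0 = ψ 0 := by
          filter_upwards [hIoo] with t ht
          rw [Set.indicator_of_mem (mem_ball_self (hc17_pos ht))]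
          simp [h0]
        rw [Set.indicator_of_mem (by simp : (0 : EuclideanSpace ℝ (Fin d)) ∈
          ball (0 : EuclideanSpace ℝ (Fin d)) 1)]
        exact Tendsto.congr' (Filter.EventuallyEq.symm hev) tendsto_const_nhds
      · have hev : ∀ᶠ t in 𝓝[>] (0:ℝ), Set.indicator (ball (0 : EuclideanSpace ℝ (Fin d)) (c17 t))
            (fun y' => ψ y' * Real.exp (-f ((c17 t)⁻¹ • y') / t)) y
            = ψ y * Real.exp (-(Real.exp (Real.log (1 / t) * (1 - 1 / ‖y‖ ^ 2)))) := by
          filter_upwards [hIoo, hc17_tendsto.eventually_gt_atTop ‖y‖] with t ht hyc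
          rw [Set.indicator_of_mem (mem_ball_zero_iff.2 hyc), neg_div, key17 hball ht hy0 hyc]
        rcases lt_or_gt_of_ne hy with h1 | h1
        · -- ‖y‖ < 1 : limit ψ y
          have hy2 : (0:ℝ) < ‖y‖ ^ 2 := by
            have : 0 < ‖y‖ := norm_pos_iff.2 hy0
            positivity
          have hcoef : 1 - 1 / ‖y‖ ^ 2 < 0 := by
            have : 1 < 1 / ‖y‖ ^ 2 := by
              rw [lt_div_iff₀ hy2]; nlinarith [norm_nonneg y]
            linarith
          have h3 : Tendsto (fun t : ℝ => Real.log (1 / t) * (1 - 1 / ‖y‖ ^ 2)) (𝓝[>] 0) atBot :=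
            hlog17.atTop_mul_const_of_neg hcoef
          have h4 : Tendsto (fun t : ℝ => Real.exp (Real.log (1 / t) * (1 - 1 / ‖y‖ ^ 2)))
              (𝓝[>] 0) (𝓝 0) := Real.tendsto_exp_atBot.comp h3
          have h5 : Tendsto (fun t : ℝ =>
              ψ y * Real.exp (-(Real.exp (Real.log (1 / t) * (1 - 1 / ‖y‖ ^ 2)))))
              (𝓝[>] 0) (𝓝 (ψ y * Real.exp (-0))) :=
            Tendsto.const_mul _ ((Real.continuous_exp.tendsto _).comp h4.neg)
          rw [Set.indicator_of_mem (mem_ball_zero_iff.2 h1)]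
          refine Tendsto.congr' (Filter.EventuallyEq.symm hev) ?_
          simpa using h5
        · -- 1 < ‖y‖ : limit 0
          have hy2 : (0:ℝ) < ‖y‖ ^ 2 := by positivity
          have hcoef : 0 < 1 - 1 / ‖y‖ ^ 2 := by
            have : 1 / ‖y‖ ^ 2 < 1 := by
              rw [div_lt_one hy2]; nlinarith
            linarith
          have h3 : Tendsto (fun t : ℝ => Real.log (1 / t) * (1 - 1 / ‖y‖ ^ 2)) (𝓝[>] 0) atTop :=
            hlog17.atTop_mul_const hcoef
          have h4 : Tendsto (fun t : ℝ =>
              -(Real.exp (Real.log (1 / t) * (1 - 1 / ‖y‖ ^ 2)))) (𝓝[>] 0) atBot :=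
            tendsto_neg_atTop_atBot.comp (Real.tendsto_exp_atTop.comp h3)
          have h5 : Tendsto (fun t : ℝ =>
              ψ y * Real.exp (-(Real.exp (Real.log (1 / t) * (1 - 1 / ‖y‖ ^ 2)))))
              (𝓝[>] 0) (𝓝 (ψ y * 0)) :=
            Tendsto.const_mul _ (Real.tendsto_exp_atBot.comp h4)
          rw [Set.indicator_of_notMem (by
            simp only [mem_ball_zero_iff, not_lt]; exact h1.le)]
          refine Tendsto.congr' (Filter.EventuallyEq.symm hev) ?_
          simpa using h5
  
  have hinner' : Tendsto (fun t => ∫ y in ball (0 : EuclideanSpace ℝ (Fin d)) (c17 t),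
      ψ y * Real.exp (-f ((c17 t)⁻¹ • y) / t)) (𝓝[>] 0)
      (𝓝 (∫ y in ball (0 : EuclideanSpace ℝ (Fin d)) 1, ψ y)) := by
    simpa [integral_indicator measurableSet_ball] using hinner
  have hexpneg1 : Real.exp (-1) < 1 := by
    rw [Real.exp_lt_one_iff]; norm_num
  have htail : Tendsto (fun t => ∫ y in (ball (0 : EuclideanSpace ℝ (Fin d)) (c17 t))ᶜ,
      ψ y * Real.exp (-f ((c17 t)⁻¹ • y) / t)) (𝓝[>] 0) (𝓝 0) := by
    set I := ∫ x : EuclideanSpace ℝ (Fin d), Real.exp (-f x) with hI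
    apply squeeze_zero_norm'
      (a := fun t => ‖ψ‖ * (Real.exp (-a * (1/t - 1)) * (c17 t)^d) * I)
    · filter_upwards [hIoo] with t ht
      have hc := hc17_pos ht
      have hint' : Integrable (fun y : EuclideanSpace ℝ (Fin d) =>
          Real.exp (-f ((c17 t)⁻¹ • y))) := hint.comp_smul (inv_ne_zero hc.ne')
      have hg : Integrable (fun y : EuclideanSpace ℝ (Fin d) =>
          (‖ψ‖ * Real.exp (-a * (1/t - 1))) * Real.exp (-f ((c17 t)⁻¹ • y))) :=
        hint'.const_mul _
      calc ‖∫ y in (ball (0 : EuclideanSpace ℝ (Fin d)) (c17 t))ᶜ,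
            ψ y * Real.exp (-f ((c17 t)⁻¹ • y) / t)‖
          ≤ ∫ y in (ball (0 : EuclideanSpace ℝ (Fin d)) (c17 t))ᶜ,
            ‖ψ y * Real.exp (-f ((c17 t)⁻¹ • y) / t)‖ := norm_integral_le_integral_norm _
        _ ≤ ∫ y in (ball (0 : EuclideanSpace ℝ (Fin d)) (c17 t))ᶜ,
            (‖ψ‖ * Real.exp (-a * (1/t - 1))) * Real.exp (-f ((c17 t)⁻¹ • y)) := by
            apply setIntegral_mono_on ((hψK t ht).norm.integrableOn) hg.integrableOn
              measurableSet_ball.compl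
            intro y hyc
            have hyge : c17 t ≤ ‖y‖ := by
              have h := hyc
              rw [Set.mem_compl_iff, mem_ball_zero_iff, not_lt] at h
              exact h
            have hz : ‖(c17 t)⁻¹ • y‖ = ‖y‖ / c17 t := by
              rw [norm_smul, Real.norm_eq_abs, abs_inv, abs_of_pos hc, inv_mul_eq_div]
            have hzmem : (c17 t)⁻¹ • y ∉ ball (0 : EuclideanSpace ℝ (Fin d)) 1 := by
              rw [mem_ball_zero_iff, hz, not_lt, le_div_iff₀ hc, one_mul]
              exact hyge
            have hfa := hout _ hzmem
            have ht0 : (t:ℝ) ≠ 0 := ht.1.ne'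
            have hsplit : -f ((c17 t)⁻¹ • y) / t
                = -f ((c17 t)⁻¹ • y) * (1/t - 1) + -f ((c17 t)⁻¹ • y) := by
              field_simp
              ring
            have h9 : (0:ℝ) ≤ 1/t - 1 := by
              have h11 : 1 ≤ 1/t := one_le_one_div ht.1 ht.2.le
              linarith
            rw [norm_mul, Real.norm_eq_abs (Real.exp _), abs_of_pos (Real.exp_pos _),
              hsplit, Real.exp_add]
            have h8 : Real.exp (-f ((c17 t)⁻¹ • y) * (1/t - 1)) ≤ Real.exp (-a * (1/t-1)) := by
              apply Real.exp_le_exp.2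
              nlinarith [hfa.le]
            calc ‖ψ y‖ * (Real.exp (-f ((c17 t)⁻¹ • y) * (1/t - 1))
                  * Real.exp (-f ((c17 t)⁻¹ • y)))
                ≤ ‖ψ‖ * (Real.exp (-a*(1/t-1)) * Real.exp (-f ((c17 t)⁻¹ • y))) := by
                  apply mul_le_mul (ψ.norm_coe_le_norm y) ?_ (by positivity) (norm_nonneg _)
                  exact mul_le_mul_of_nonneg_right h8 (Real.exp_pos _).le
              _ = (‖ψ‖ * Real.exp (-a*(1/t-1))) * Real.exp (-f ((c17 t)⁻¹ • y)) := by ring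
        _ ≤ ∫ y : EuclideanSpace ℝ (Fin d),
            (‖ψ‖ * Real.exp (-a * (1/t - 1))) * Real.exp (-f ((c17 t)⁻¹ • y)) :=
            setIntegral_le_integral hg (Eventually.of_forall fun y => by positivity)
        _ = ‖ψ‖ * (Real.exp (-a * (1/t - 1)) * (c17 t)^d) * I := by
            rw [integral_const_mul]
            have h7 := Measure.integral_comp_smul (volume : Measure (EuclideanSpace ℝ (Fin d)))
              (fun x => Real.exp (-f x)) ((c17 t)⁻¹)
            rw [finrank_euclideanSpace_fin] at h7
            have habs : |((c17 t)⁻¹ ^ d)⁻¹| = c17 t ^ d := by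
              rw [inv_pow, inv_inv, abs_of_pos (pow_pos hc d)]
            rw [h7, habs, smul_eq_mul, ← hI]
            ring
    · -- the bound tends to 0
      have hY : Tendsto (fun u : ℝ => u^d * Real.exp (-a*u)) atTop (𝓝 0) := by
        simpa [Real.rpow_natCast] using
          tendsto_rpow_mul_exp_neg_mul_atTop_nhds_zero (d:ℝ) a ha
      have hcomp : Tendsto (fun t : ℝ => (1/t)^d * Real.exp (-a * (1/t)))
          (𝓝[>] 0) (𝓝 0) := hY.comp hinv17
      have key : Tendsto (fun t : ℝ => Real.exp (-a * (1/t - 1)) * (c17 t)^d)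
          (𝓝[>] 0) (𝓝 0) := by
        apply squeeze_zero' (g := fun t : ℝ => Real.exp a * ((1/t)^d * Real.exp (-a*(1/t))))
        · filter_upwards [hIoo] with t ht
          exact mul_nonneg (Real.exp_pos _).le (pow_nonneg (hc17_pos ht).le d)
        · filter_upwards [Ioo_mem_nhdsGT_of_mem
            ⟨le_refl (0:ℝ), Real.exp_pos (-1)⟩] with t ht
          have ht1 : t ∈ Set.Ioo (0:ℝ) 1 := ⟨ht.1, ht.2.trans hexpneg1⟩
          have hL1 : 1 ≤ Real.log (1/t) := by
            rw [Real.le_log_iff_exp_le (one_div_pos.2 ht.1)]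
            have he : Real.exp 1 = (Real.exp (-1))⁻¹ := by
              rw [← Real.exp_neg]; norm_num
            rw [he, one_div]
            exact inv_anti₀ ht.1 ht.2.le
          have hcle : c17 t ≤ 1/t := by
            calc c17 t = (Real.log (1/t)) ^ ((1:ℝ)/2) := rfl
              _ ≤ (Real.log (1/t)) ^ (1:ℝ) :=
                  Real.rpow_le_rpow_of_exponent_le hL1 (by norm_num)
              _ = Real.log (1/t) := Real.rpow_one _
              _ ≤ 1/t - 1 := Real.log_le_sub_one_of_pos (one_div_pos.2 ht.1)
              _ ≤ 1/t := by linarith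
          have hsplit2 : Real.exp (-a * (1/t - 1)) = Real.exp a * Real.exp (-a * (1/t)) := by
            rw [← Real.exp_add]; congr 1; ring
          rw [hsplit2]
          calc Real.exp a * Real.exp (-a*(1/t)) * (c17 t)^d
              ≤ Real.exp a * Real.exp (-a*(1/t)) * (1/t)^d := by
                apply mul_le_mul_of_nonneg_left
                  (pow_le_pow_left₀ (hc17_pos ht1).le hcle d) (by positivity)
            _ = Real.exp a * ((1/t)^d * Real.exp (-a*(1/t))) := by ring
        · simpa using hcomp.const_mul (Real.exp a)
      have hfin := (key.const_mul ‖ψ‖).mul_const I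
      simpa using hfin
  have hsum := hinner'.add htail
  rw [add_zero] at hsum
  refine Tendsto.congr' ?_ hsum
  filter_upwards [hIoo] with t ht
  exact integral_add_compl measurableSet_ball (hψK t ht)

/-- Infinitely flat minimum: if f(x) = e^{-1/‖x‖²} on the unit ball (f(0)=0),
f > a > 0 outside, f coercive with e^{-f} integrable, and X_t ~ C_t e^{-f/t}, then
log^{1/2}(1/t)·X_t converges in law to the uniform distribution on the unit ball. -/
theorem stmt17 (d : ℕ) (hd : 1 ≤ d) (f : EuclideanSpace ℝ (Fin d) → ℝ)
    (hmeas : Measurable f)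
    (hcoercive : ∀ C : ℝ, ∃ R : ℝ, ∀ x : EuclideanSpace ℝ (Fin d), R ≤ ‖x‖ → C ≤ f x)
    (hint : Integrable (fun x : EuclideanSpace ℝ (Fin d) => Real.exp (-f x)))
    (hball : ∀ x ∈ ball (0 : EuclideanSpace ℝ (Fin d)) 1, x ≠ 0 →
      f x = Real.exp (-1 / ‖x‖ ^ 2))
    (h0 : f 0 = 0)
    (a : ℝ) (ha : 0 < a)
    (hout : ∀ x ∉ ball (0 : EuclideanSpace ℝ (Fin d)) 1, a < f x)
    (φ : BoundedContinuousFunction (EuclideanSpace ℝ (Fin d)) ℝ) :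
    Tendsto (fun t : ℝ =>
        (∫ x : EuclideanSpace ℝ (Fin d),
            φ ((Real.log (1 / t)) ^ ((1:ℝ) / 2) • x) * Real.exp (-f x / t)) /
          ∫ x : EuclideanSpace ℝ (Fin d), Real.exp (-f x / t))
      (𝓝[>] 0)
      (𝓝 ((∫ x in ball (0 : EuclideanSpace ℝ (Fin d)) 1, φ x) /
        (volume (ball (0 : EuclideanSpace ℝ (Fin d)) 1)).toReal)) := by
  have hIoo : Set.Ioo (0:ℝ) 1 ∈ 𝓝[>] (0:ℝ) :=
    Ioo_mem_nhdsGT_of_mem ⟨le_refl 0, one_pos⟩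
  have hnum := aux17 d hd f hmeas hint hball h0 a ha hout φ
  have hden := aux17 d hd f hmeas hint hball h0 a ha hout
    (1 : BoundedContinuousFunction (EuclideanSpace ℝ (Fin d)) ℝ)
  simp only [BoundedContinuousFunction.coe_one, Pi.one_apply, one_mul] at hden
  rw [setIntegral_const, smul_eq_mul, mul_one] at hden
  have hvolpos : 0 < (volume (ball (0 : EuclideanSpace ℝ (Fin d)) 1)).toReal :=
    ENNReal.toReal_pos (measure_ball_pos volume 0 one_pos).ne' measure_ball_lt_top.ne
  have hdiv := hnum.div hden hvolpos.ne'
  refine Tendsto.congr' ?_ hdiv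
  filter_upwards [hIoo] with t ht
  have hc := hc17_pos ht
  have habs_ne : |(c17 t ^ d)⁻¹| ≠ 0 :=
    abs_ne_zero.2 (inv_ne_zero (pow_ne_zero d hc.ne'))
  have e1 : ∫ x : EuclideanSpace ℝ (Fin d), φ (c17 t • x) * Real.exp (-f x / t)
      = |(c17 t ^ d)⁻¹| * ∫ y : EuclideanSpace ℝ (Fin d),
          φ y * Real.exp (-f ((c17 t)⁻¹ • y) / t) := by
    have h7 := Measure.integral_comp_smul (volume : Measure (EuclideanSpace ℝ (Fin d)))
      (fun y : EuclideanSpace ℝ (Fin d) => φ y * Real.exp (-f ((c17 t)⁻¹ • y) / t)) (c17 t)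
    rw [finrank_euclideanSpace_fin] at h7
    simp only [inv_smul_smul₀ hc.ne'] at h7
    exact h7.trans (by rw [smul_eq_mul])
  have e2 : ∫ x : EuclideanSpace ℝ (Fin d), Real.exp (-f x / t)
      = |(c17 t ^ d)⁻¹| * ∫ y : EuclideanSpace ℝ (Fin d),
          Real.exp (-f ((c17 t)⁻¹ • y) / t) := by
    have h7 := Measure.integral_comp_smul (volume : Measure (EuclideanSpace ℝ (Fin d)))
      (fun y : EuclideanSpace ℝ (Fin d) => Real.exp (-f ((c17 t)⁻¹ • y) / t)) (c17 t)
    rw [finrank_euclideanSpace_fin] at h7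
    simp only [inv_smul_smul₀ hc.ne'] at h7
    exact h7.trans (by rw [smul_eq_mul])
  show _ = _
  rw [show ((Real.log (1 / t)) ^ ((1:ℝ) / 2)) = c17 t from rfl, e1, e2,
    mul_div_mul_left _ _ habs_ne]
  rfl
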